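/- Any set of four points in the plane admits a Hamiltonian cycle that is a Tverberg graph: there is a cyclic ordering of the four points such that the four disks whose diameters are the consecutive pairs have a common point. -/
import Mathlib

open Real
open scoped RealInnerProductSpace

/-- The closed disk with diameter segment `ab`. -/
def diskD (a b : EuclideanSpace ℝ (Fin 2)) : Set (EuclideanSpace ℝ (Fin 2)) :=
  Metric.closedBall (midpoint ℝ a b) (dist a b / 2)

section Helpers

variable {F : Type*} [NormedAddCommGroup F] [InnerProductSpace ℝ F]

private lemma mem_diskD {x y q : EuclideanSpace ℝ (Fin 2)}
    (h : ⟪x - q, y - q⟫ ≤ 0) : q ∈ diskD x y := by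
  simp only [diskD, Metric.mem_closedBall, dist_eq_norm]
  have hq : q - midpoint ℝ x y = (-(2⁻¹ : ℝ)) • ((x - q) + (y - q)) := by
    rw [midpoint_eq_smul_add, invOf_eq_inv]
    module
  have hxy : x - y = (x - q) - (y - q) := by abel
  rw [hq, hxy, norm_smul]
  have hL := norm_add_sq_real (x - q) (y - q)
  have hR := norm_sub_sq_real (x - q) (y - q)
  have h1 : ‖(x-q) + (y-q)‖^2 ≤ ‖(x-q) - (y-q)‖^2 := by rw [hL, hR]; linarith
  have h2 : ‖(x-q) + (y-q)‖ ≤ ‖(x-q) - (y-q)‖ := by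
    nlinarith [norm_nonneg ((x-q)+(y-q)), norm_nonneg ((x-q)-(y-q))]
  rw [norm_neg, norm_inv]
  simp only [Real.norm_ofNat]
  linarith

private lemma micro (x y p q a b g : ℝ) (hx : 0 ≤ x) (hp : 0 < p) (hq : 0 < q)
    (hC : p^2 ≤ x * y) (ha : 0 ≤ a) (hb : 0 ≤ b) (hg : 0 ≤ g)
    (hs : 0 < a + b + g) (he : a*x + b*p + g*q = 0) : False := by
  have hb0 : b = 0 := by nlinarith [mul_nonneg ha hx, mul_nonneg hb hp.le, mul_nonneg hg hq.le]
  have hg0 : g = 0 := by nlinarith [mul_nonneg ha hx, mul_nonneg hb hp.le, mul_nonneg hg hq.le]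
  rw [hb0, hg0] at he
  have hax : a * x = 0 := by linarith
  have ha' : 0 < a := by linarith
  have hx0 : x = 0 := by
    rcases mul_eq_zero.mp hax with h | h
    · exact absurd h ha'.ne'
    · exact h
  rw [hx0] at hC
  nlinarith [mul_pos hp hp]

private lemma permOfDistinct (i j k l : Fin 4) (hij : i ≠ j) (hik : i ≠ k) (hil : i ≠ l)
    (hjk : j ≠ k) (hjl : j ≠ l) (hkl : k ≠ l) :
    ∃ τ : Equiv.Perm (Fin 4), τ 0 = i ∧ τ 1 = j ∧ τ 2 = k ∧ τ 3 = l := by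
  have hinj : Function.Injective ![i,j,k,l] := by
    intro a b hab
    fin_cases a <;> fin_cases b <;> simp_all
  refine ⟨Equiv.ofBijective _ (Finite.injective_iff_bijective.mp hinj), ?_, ?_, ?_, ?_⟩ <;> rfl

/-- Helper: produce the cycle `i → j → k → l → i` given the four edge inequalities. -/
private lemma cycleOf (w : Fin 4 → F) (i j k l : Fin 4) (hij : i ≠ j) (hik : i ≠ k)
    (hil : i ≠ l) (hjk : j ≠ k) (hjl : j ≠ l) (hkl : k ≠ l)
    (e1 : ⟪w i, w j⟫ ≤ 0) (e2 : ⟪w j, w k⟫ ≤ 0) (e3 : ⟪w k, w l⟫ ≤ 0) (e4 : ⟪w l, w i⟫ ≤ 0) :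
    ∃ σ : Equiv.Perm (Fin 4), ∀ m : Fin 4, ⟪w (σ m), w (σ (m+1))⟫ ≤ 0 := by
  obtain ⟨τ, ht0, ht1, ht2, ht3⟩ := permOfDistinct i j k l hij hik hil hjk hjl hkl
  refine ⟨τ, ?_⟩
  intro m
  fin_cases m
  · show ⟪w (τ 0), w (τ 1)⟫ ≤ 0; rw [ht0, ht1]; exact e1
  · show ⟪w (τ 1), w (τ 2)⟫ ≤ 0; rw [ht1, ht2]; exact e2
  · show ⟪w (τ 2), w (τ 3)⟫ ≤ 0; rw [ht2, ht3]; exact e3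
  · show ⟪w (τ 3), w (τ 0)⟫ ≤ 0; rw [ht3, ht0]; exact e4

private lemma reindex (w : Fin 4 → F) (τ : Equiv.Perm (Fin 4))
    (h : ∃ σ : Equiv.Perm (Fin 4), ∀ m : Fin 4, ⟪(w ∘ τ) (σ m), (w ∘ τ) (σ (m+1))⟫ ≤ 0) :
    ∃ σ : Equiv.Perm (Fin 4), ∀ m : Fin 4, ⟪w (σ m), w (σ (m+1))⟫ ≤ 0 := by
  obtain ⟨σ, hσ⟩ := h
  exact ⟨σ.trans τ, hσ⟩

/-- The star case: `w 0 = 0` and a nontrivial nonnegative relation among the others. -/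
private lemma star0 (w : Fin 4 → F) (h0 : w 0 = 0) (a b g : ℝ)
    (ha : 0 ≤ a) (hb : 0 ≤ b) (hg : 0 ≤ g) (hs : 0 < a + b + g)
    (hrel : a • w 1 + b • w 2 + g • w 3 = 0) :
    ∃ σ : Equiv.Perm (Fin 4), ∀ m : Fin 4, ⟪w (σ m), w (σ (m+1))⟫ ≤ 0 := by
  have z1 : ∀ x : F, ⟪w 0, x⟫ ≤ 0 := fun x => by rw [h0, inner_zero_left]
  have z2 : ∀ x : F, ⟪x, w 0⟫ ≤ 0 := fun x => by rw [h0, inner_zero_right]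
  set p12 := ⟪w 1, w 2⟫ with hp12
  set p13 := ⟪w 1, w 3⟫ with hp13
  set p23 := ⟪w 2, w 3⟫ with hp23
  have e1 : a * ⟪w 1, w 1⟫ + b * p12 + g * p13 = 0 := by
    have := congrArg (fun z => ⟪w 1, z⟫) hrel
    simpa only [inner_add_right, real_inner_smul_right, inner_zero_right] using this
  have e2 : a * p12 + b * ⟪w 2, w 2⟫ + g * p23 = 0 := by
    have := congrArg (fun z => ⟪w 2, z⟫) hrel
    simpa only [inner_add_right, real_inner_smul_right, inner_zero_right,
      real_inner_comm (w 1) (w 2)] using this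
  have e3 : a * p13 + b * p23 + g * ⟪w 3, w 3⟫ = 0 := by
    have := congrArg (fun z => ⟪w 3, z⟫) hrel
    simpa only [inner_add_right, real_inner_smul_right, inner_zero_right,
      real_inner_comm (w 1) (w 3), real_inner_comm (w 2) (w 3)] using this
  have C12 : p12^2 ≤ ⟪w 1, w 1⟫ * ⟪w 2, w 2⟫ := by
    have := real_inner_mul_inner_self_le (w 1) (w 2); nlinarith [this]
  have C13 : p13^2 ≤ ⟪w 1, w 1⟫ * ⟪w 3, w 3⟫ := by
    have := real_inner_mul_inner_self_le (w 1) (w 3); nlinarith [this]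
  have n1 := real_inner_self_nonneg (x := w 1)
  have n2 := real_inner_self_nonneg (x := w 2)
  have n3 := real_inner_self_nonneg (x := w 3)
  by_cases c1 : p12 ≤ 0 ∧ p23 ≤ 0
  · exact cycleOf w 0 1 2 3 (by decide) (by decide) (by decide) (by decide) (by decide)
      (by decide) (z1 _) c1.1 c1.2 (z2 _)
  by_cases c2 : p12 ≤ 0 ∧ p13 ≤ 0
  · exact cycleOf w 0 2 1 3 (by decide) (by decide) (by decide) (by decide) (by decide)
      (by decide) (z1 _) (by rw [real_inner_comm]; exact c2.1) c2.2 (z2 _)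
  by_cases c3 : p13 ≤ 0 ∧ p23 ≤ 0
  · exact cycleOf w 0 1 3 2 (by decide) (by decide) (by decide) (by decide) (by decide)
      (by decide) (z1 _) c3.1 (by rw [real_inner_comm]; exact c3.2) (z2 _)
  · exfalso
    push_neg at c1 c2 c3
    rcases lt_or_ge 0 p12 with h12 | h12
    · rcases lt_or_ge 0 p13 with h13 | h13
      · exact micro ⟪w 1, w 1⟫ ⟪w 2, w 2⟫ p12 p13 a b g n1 h12 h13 C12 ha hb hg hs e1
      · have h23 := c3 h13
        exact micro ⟪w 2, w 2⟫ ⟪w 1, w 1⟫ p12 p23 b a g n2 h12 h23 (by nlinarith [C12])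
          hb ha hg (by linarith) (by linarith)
    · have h13 := c2 h12
      have h23 := c1 h12
      exact micro ⟪w 3, w 3⟫ ⟪w 1, w 1⟫ p13 p23 g a b n3 h13 h23 (by nlinarith [C13])
        hg ha hb (by linarith) (by linarith)

private lemma sign1 (b t s a : ℝ) (hb : 0 < b) (ha : 0 ≤ a) (hs : 0 ≤ s)
    (h : a*s + b*t = 0) : t ≤ 0 := by
  by_contra h'
  push_neg at h'
  nlinarith [mul_pos hb h', mul_nonneg ha hs]

/-- The crossing case: two nontrivial nonnegative relations. -/
private lemma cross0 (w : Fin 4 → F) (a b c d : ℝ)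
    (ha : 0 ≤ a) (hb : 0 ≤ b) (hc : 0 ≤ c) (hd : 0 ≤ d)
    (hab : 0 < a + b) (hcd : 0 < c + d)
    (h1 : a • w 0 + b • w 2 = 0) (h2 : c • w 1 + d • w 3 = 0) :
    ∃ σ : Equiv.Perm (Fin 4), ∀ m : Fin 4, ⟪w (σ m), w (σ (m+1))⟫ ≤ 0 := by
  by_cases hb0 : b = 0
  · have ha' : 0 < a := by rw [hb0] at hab; simpa using hab
    have h0 : w 0 = 0 := by
      have : a • w 0 = 0 := by rw [hb0] at h1; simpa using h1
      simpa [ha'.ne'] using (smul_eq_zero.mp this)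
    exact star0 w h0 c 0 d hc le_rfl hd (by simpa using hcd) (by simpa using h2)
  by_cases ha0 : a = 0
  · have hb' : 0 < b := lt_of_le_of_ne hb (Ne.symm hb0)
    have h0 : w 2 = 0 := by
      have : b • w 2 = 0 := by rw [ha0] at h1; simpa using h1
      simpa [hb0] using (smul_eq_zero.mp this)
    obtain ⟨τ, ht0, ht1, ht2, ht3⟩ := permOfDistinct 2 1 0 3 (by decide) (by decide)
      (by decide) (by decide) (by decide) (by decide)
    refine reindex w τ (star0 (w ∘ τ) ?_ c 0 d hc le_rfl hd (by simpa using hcd) ?_)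
    · show w (τ 0) = 0; rw [ht0]; exact h0
    · show c • w (τ 1) + (0:ℝ) • w (τ 2) + d • w (τ 3) = 0
      rw [ht1, ht2, ht3]; simpa using h2
  by_cases hd0 : d = 0
  · have hc' : 0 < c := by rw [hd0] at hcd; simpa using hcd
    have h0 : w 1 = 0 := by
      have : c • w 1 = 0 := by rw [hd0] at h2; simpa using h2
      simpa [hc'.ne'] using (smul_eq_zero.mp this)
    obtain ⟨τ, ht0, ht1, ht2, ht3⟩ := permOfDistinct 1 0 2 3 (by decide) (by decide)
      (by decide) (by decide) (by decide) (by decide)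
    refine reindex w τ (star0 (w ∘ τ) ?_ a b 0 ha hb le_rfl (by simpa using hab) ?_)
    · show w (τ 0) = 0; rw [ht0]; exact h0
    · show a • w (τ 1) + b • w (τ 2) + (0:ℝ) • w (τ 3) = 0
      rw [ht1, ht2, ht3]; simpa using h1
  by_cases hc0 : c = 0
  · have hd' : 0 < d := lt_of_le_of_ne hd (Ne.symm hd0)
    have h0 : w 3 = 0 := by
      have : d • w 3 = 0 := by rw [hc0] at h2; simpa using h2
      simpa [hd0] using (smul_eq_zero.mp this)
    obtain ⟨τ, ht0, ht1, ht2, ht3⟩ := permOfDistinct 3 1 2 0 (by decide) (by decide)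
      (by decide) (by decide) (by decide) (by decide)
    refine reindex w τ (star0 (w ∘ τ) ?_ 0 b a le_rfl hb ha (by linarith) ?_)
    · show w (τ 0) = 0; rw [ht0]; exact h0
    · show (0:ℝ) • w (τ 1) + b • w (τ 2) + a • w (τ 3) = 0
      rw [ht1, ht2, ht3]
      simpa [add_comm] using h1
  have ha' : 0 < a := lt_of_le_of_ne ha (Ne.symm ha0)
  have hb' : 0 < b := lt_of_le_of_ne hb (Ne.symm hb0)
  have hc' : 0 < c := lt_of_le_of_ne hc (Ne.symm hc0)
  have hd' : 0 < d := lt_of_le_of_ne hd (Ne.symm hd0)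
  have f1 : a * ⟪w 0, w 0⟫ + b * ⟪w 0, w 2⟫ = 0 := by
    have := congrArg (fun z => ⟪w 0, z⟫) h1
    simpa only [inner_add_right, real_inner_smul_right, inner_zero_right] using this
  have f2 : a * ⟪w 1, w 0⟫ + b * ⟪w 1, w 2⟫ = 0 := by
    have := congrArg (fun z => ⟪w 1, z⟫) h1
    simpa only [inner_add_right, real_inner_smul_right, inner_zero_right] using this
  have g1 : c * ⟪w 1, w 1⟫ + d * ⟪w 1, w 3⟫ = 0 := by
    have := congrArg (fun z => ⟪w 1, z⟫) h2
    simpa only [inner_add_right, real_inner_smul_right, inner_zero_right] using this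
  have g2 : c * ⟪w 0, w 1⟫ + d * ⟪w 0, w 3⟫ = 0 := by
    have := congrArg (fun z => ⟪w 0, z⟫) h2
    simpa only [inner_add_right, real_inner_smul_right, inner_zero_right] using this
  have g3 : c * ⟪w 2, w 1⟫ + d * ⟪w 2, w 3⟫ = 0 := by
    have := congrArg (fun z => ⟪w 2, z⟫) h2
    simpa only [inner_add_right, real_inner_smul_right, inner_zero_right] using this
  have t02 : ⟪w 0, w 2⟫ ≤ 0 :=
    sign1 b _ _ a hb' ha (real_inner_self_nonneg (x := w 0)) f1
  have t13 : ⟪w 1, w 3⟫ ≤ 0 :=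
    sign1 d _ _ c hd' hc (real_inner_self_nonneg (x := w 1)) g1
  rcases le_or_gt ⟪w 0, w 1⟫ 0 with hp | hp
  · have t12 : 0 ≤ ⟪w 1, w 2⟫ := by
      have h10 : ⟪w 1, w 0⟫ ≤ 0 := by rwa [real_inner_comm]
      have := sign1 b (-⟪w 1, w 2⟫) (-⟪w 1, w 0⟫) a hb' ha (by linarith) (by linarith)
      linarith
    have t23 : ⟪w 2, w 3⟫ ≤ 0 := by
      refine sign1 d _ _ c hd' hc ?_ g3
      rwa [real_inner_comm]
    exact cycleOf w 0 2 3 1 (by decide) (by decide) (by decide) (by decide) (by decide)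
      (by decide) t02 t23 (by rwa [real_inner_comm]) (by rwa [real_inner_comm])
  · have t21 : ⟪w 2, w 1⟫ ≤ 0 := by
      rw [real_inner_comm]
      refine sign1 b _ _ a hb' ha ?_ f2
      rw [real_inner_comm]; exact hp.le
    have t30 : ⟪w 3, w 0⟫ ≤ 0 := by
      rw [real_inner_comm]
      exact sign1 d _ _ c hd' hc hp.le g2
    exact cycleOf w 0 2 1 3 (by decide) (by decide) (by decide) (by decide) (by decide)
      (by decide) t02 t21 t13 t30

/-- One positive coefficient: the Radon point is `v i` itself. -/
private lemma caseOnePos (v : Fin 4 → F) (i j k l : Fin 4) (hij : i ≠ j) (hik : i ≠ k)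
    (hil : i ≠ l) (hjk : j ≠ k) (hjl : j ≠ l) (hkl : k ≠ l) (a b c d : ℝ)
    (ha : 0 < a) (hb : b ≤ 0) (hc : c ≤ 0) (hd : d ≤ 0)
    (hsum : a + b + c + d = 0)
    (hvec : a • v i + b • v j + c • v k + d • v l = 0) :
    ∃ q : F, ∃ σ : Equiv.Perm (Fin 4),
      ∀ m : Fin 4, ⟪v (σ m) - q, v (σ (m+1)) - q⟫ ≤ 0 := by
  set q := v i with hqdef
  have hX : b • v j + c • v k + d • v l = -(a • v i) := by
    linear_combination (norm := module) hvec
  have hrel : (-b) • (v j - q) + (-c) • (v k - q) + (-d) • (v l - q) = 0 := by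
    have expand : (-b) • (v j - q) + (-c) • (v k - q) + (-d) • (v l - q)
        = -(b • v j + c • v k + d • v l) + (b + c + d) • q := by module
    rw [expand, hX, show b + c + d = -a by linarith, hqdef, neg_smul]
    abel
  obtain ⟨τ, ht0, ht1, ht2, ht3⟩ := permOfDistinct i j k l hij hik hil hjk hjl hkl
  refine ⟨q, ?_⟩
  refine reindex (fun m => v m - q) τ
    (star0 ((fun m => v m - q) ∘ τ) ?_ (-b) (-c) (-d)
      (by linarith) (by linarith) (by linarith) (by linarith) ?_)
  · show v (τ 0) - q = 0
    rw [ht0, hqdef, sub_self]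
  · show (-b) • (v (τ 1) - q) + (-c) • (v (τ 2) - q) + (-d) • (v (τ 3) - q) = 0
    rw [ht1, ht2, ht3]; exact hrel

/-- Two positive coefficients: the crossing case. -/
private lemma caseTwoPos (v : Fin 4 → F) (i j k l : Fin 4) (hij : i ≠ j) (hik : i ≠ k)
    (hil : i ≠ l) (hjk : j ≠ k) (hjl : j ≠ l) (hkl : k ≠ l) (a b c d : ℝ)
    (ha : 0 < a) (hb : 0 < b) (hc : c ≤ 0) (hd : d ≤ 0)
    (hsum : a + b + c + d = 0)
    (hvec : a • v i + b • v j + c • v k + d • v l = 0) :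
    ∃ q : F, ∃ σ : Equiv.Perm (Fin 4),
      ∀ m : Fin 4, ⟪v (σ m) - q, v (σ (m+1)) - q⟫ ≤ 0 := by
  have hS : 0 < a + b := by linarith
  set q := (a + b)⁻¹ • (a • v i + b • v j) with hqdef
  have hq : (a + b) • q = a • v i + b • v j := by
    rw [hqdef]; exact smul_inv_smul₀ hS.ne' _
  have hw1 : a • (v i - q) + b • (v j - q) = 0 := by
    have expand : a • (v i - q) + b • (v j - q)
        = (a • v i + b • v j) - (a + b) • q := by module
    rw [expand, hq, sub_self]
  have hw2 : (-c) • (v k - q) + (-d) • (v l - q) = 0 := by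
    have expand : (-c) • (v k - q) + (-d) • (v l - q)
        = -(c • v k + d • v l) + (c + d) • q := by module
    have hX : c • v k + d • v l = -(a • v i + b • v j) := by
      linear_combination (norm := module) hvec
    rw [expand, hX, show c + d = -(a + b) by linarith, neg_smul, hq]
    abel
  obtain ⟨τ, ht0, ht1, ht2, ht3⟩ := permOfDistinct i k j l hik hij hil
    (Ne.symm hjk) hkl hjl
  refine ⟨q, ?_⟩
  refine reindex (fun m => v m - q) τ
    (cross0 ((fun m => v m - q) ∘ τ) a b (-c) (-d)
      ha.le hb.le (by linarith) (by linarith) hS (by linarith) ?_ ?_)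
  · show a • (v (τ 0) - q) + b • (v (τ 2) - q) = 0
    rw [ht0, ht2]; exact hw1
  · show (-c) • (v (τ 1) - q) + (-d) • (v (τ 3) - q) = 0
    rw [ht1, ht3]; exact hw2

end Helpers

/-- Any set of four points in the plane admits a Hamiltonian cycle that is a
Tverberg graph: the four disks spanned by consecutive pairs have a common point. -/
theorem four_points_hamiltonian_cycle_tverberg
    (v : Fin 4 → EuclideanSpace ℝ (Fin 2)) (hinj : Function.Injective v) :
    ∃ σ : Equiv.Perm (Fin 4), ∃ q,
      ∀ i : Fin 4, q ∈ diskD (v (σ i)) (v (σ (i + 1))) := by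
  -- the three difference vectors are linearly dependent in the plane
  have hdep : ¬ LinearIndependent ℝ (fun i : Fin 3 => v i.succ - v 0) := by
    intro h
    have := h.fintype_card_le_finrank
    simp at this
  obtain ⟨g, hg, ⟨i0, hi0⟩⟩ := Fintype.not_linearIndependent_iff.mp hdep
  rw [Fin.sum_univ_three] at hg
  set c0 : ℝ := -(g 0 + g 1 + g 2) with hc0def
  set c1 : ℝ := g 0 with hc1def
  set c2 : ℝ := g 1 with hc2def
  set c3 : ℝ := g 2 with hc3def
  have hsum : c0 + c1 + c2 + c3 = 0 := by rw [hc0def]; ring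
  have hvec : c0 • v 0 + c1 • v 1 + c2 • v 2 + c3 • v 3 = 0 := by
    have h1 : (Fin.succ 0 : Fin 4) = 1 := rfl
    have h2 : (Fin.succ 1 : Fin 4) = 2 := rfl
    have h3 : (Fin.succ 2 : Fin 4) = 3 := rfl
    rw [h1, h2, h3] at hg
    rw [hc0def, hc1def, hc2def, hc3def]
    linear_combination (norm := module) hg
  have key : ∃ q : EuclideanSpace ℝ (Fin 2), ∃ σ : Equiv.Perm (Fin 4),
      ∀ m : Fin 4, ⟪v (σ m) - q, v (σ (m+1)) - q⟫ ≤ 0 := by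
    rcases lt_or_ge 0 c0 with h0 | h0 <;> rcases lt_or_ge 0 c1 with h1 | h1 <;>
      rcases lt_or_ge 0 c2 with h2 | h2 <;> rcases lt_or_ge 0 c3 with h3 | h3
    -- PPPP
    · exfalso; linarith
    -- PPPN
    · exact caseOnePos v 3 0 1 2 (by decide) (by decide) (by decide) (by decide)
        (by decide) (by decide) (-c3) (-c0) (-c1) (-c2) (by linarith) (by linarith)
        (by linarith) (by linarith) (by linarith)
        (by linear_combination (norm := module) (-1 : ℝ) • hvec)
    -- PPNP
    · exact caseOnePos v 2 0 1 3 (by decide) (by decide) (by decide) (by decide)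
        (by decide) (by decide) (-c2) (-c0) (-c1) (-c3) (by linarith) (by linarith)
        (by linarith) (by linarith) (by linarith)
        (by linear_combination (norm := module) (-1 : ℝ) • hvec)
    -- PPNN
    · exact caseTwoPos v 0 1 2 3 (by decide) (by decide) (by decide) (by decide)
        (by decide) (by decide) c0 c1 c2 c3 h0 h1 h2 h3 hsum
        (by linear_combination (norm := module) hvec)
    -- PNPP
    · exact caseOnePos v 1 0 2 3 (by decide) (by decide) (by decide) (by decide)
        (by decide) (by decide) (-c1) (-c0) (-c2) (-c3) (by linarith) (by linarith)
        (by linarith) (by linarith) (by linarith)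
        (by linear_combination (norm := module) (-1 : ℝ) • hvec)
    -- PNPN
    · exact caseTwoPos v 0 2 1 3 (by decide) (by decide) (by decide) (by decide)
        (by decide) (by decide) c0 c2 c1 c3 h0 h2 h1 h3 (by linarith)
        (by linear_combination (norm := module) hvec)
    -- PNNP
    · exact caseTwoPos v 0 3 1 2 (by decide) (by decide) (by decide) (by decide)
        (by decide) (by decide) c0 c3 c1 c2 h0 h3 h1 h2 (by linarith)
        (by linear_combination (norm := module) hvec)
    -- PNNN
    · exact caseOnePos v 0 1 2 3 (by decide) (by decide) (by decide) (by decide)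
        (by decide) (by decide) c0 c1 c2 c3 h0 h1 h2 h3 hsum
        (by linear_combination (norm := module) hvec)
    -- NPPP
    · exact caseOnePos v 0 1 2 3 (by decide) (by decide) (by decide) (by decide)
        (by decide) (by decide) (-c0) (-c1) (-c2) (-c3) (by linarith) (by linarith)
        (by linarith) (by linarith) (by linarith)
        (by linear_combination (norm := module) (-1 : ℝ) • hvec)
    -- NPPN
    · exact caseTwoPos v 1 2 0 3 (by decide) (by decide) (by decide) (by decide)
        (by decide) (by decide) c1 c2 c0 c3 h1 h2 h0 h3 (by linarith)
        (by linear_combination (norm := module) hvec)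
    -- NPNP
    · exact caseTwoPos v 1 3 0 2 (by decide) (by decide) (by decide) (by decide)
        (by decide) (by decide) c1 c3 c0 c2 h1 h3 h0 h2 (by linarith)
        (by linear_combination (norm := module) hvec)
    -- NPNN
    · exact caseOnePos v 1 0 2 3 (by decide) (by decide) (by decide) (by decide)
        (by decide) (by decide) c1 c0 c2 c3 h1 h0 h2 h3 (by linarith)
        (by linear_combination (norm := module) hvec)
    -- NNPP
    · exact caseTwoPos v 2 3 0 1 (by decide) (by decide) (by decide) (by decide)
        (by decide) (by decide) c2 c3 c0 c1 h2 h3 h0 h1 (by linarith)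
        (by linear_combination (norm := module) hvec)
    -- NNPN
    · exact caseOnePos v 2 0 1 3 (by decide) (by decide) (by decide) (by decide)
        (by decide) (by decide) c2 c0 c1 c3 h2 h0 h1 h3 (by linarith)
        (by linear_combination (norm := module) hvec)
    -- NNNP
    · exact caseOnePos v 3 0 1 2 (by decide) (by decide) (by decide) (by decide)
        (by decide) (by decide) c3 c0 c1 c2 h3 h0 h1 h2 (by linarith)
        (by linear_combination (norm := module) hvec)
    -- NNNN : all coefficients vanish, contradicting nontriviality
    · exfalso
      have e1 : c1 = 0 := by linarith
      have e2 : c2 = 0 := by linarith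
      have e3 : c3 = 0 := by linarith
      fin_cases i0
      · exact hi0 e1
      · exact hi0 e2
      · exact hi0 e3
  obtain ⟨q, σ, h⟩ := key
  exact ⟨σ, q, fun m => mem_diskD (h m)⟩
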